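/- For all integers n ≥ 2 and d ≥ 0, the set L(n) ∪ L(n+1) ∪ ⋯ ∪ L(n+d) is (d+1)-lineable in ℓ∞ but not (d+2)-lineable: there exists a (d+1)-dimensional subspace V of ℓ∞ with every non-zero vector of V having between n and n+d accumulation points, but no such (d+2)-dimensional subspace exists. -/

import Mathlib

open Filter Topology Set


/-- The set of accumulation points of a real sequence. -/
def AccPts (x : ℕ → ℝ) : Set ℝ := {η | ∀ ε > 0, {n : ℕ | |x n - η| < ε}.Infinite}

/-- The Banach space `ℓ∞` of bounded real sequences. -/
noncomputable abbrev linf : Type := lp (fun _ : ℕ => ℝ) ⊤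

lemma accPts_iff_mapClusterPt (f : ℕ → ℝ) (η : ℝ) :
    η ∈ AccPts f ↔ MapClusterPt η atTop f := by
  rw [mapClusterPt_iff_frequently]
  constructor
  · intro h s hs
    obtain ⟨ε, hε, hball⟩ := Metric.mem_nhds_iff.1 hs
    refine Frequently.mono ?_ fun m hm => hball hm
    rw [Nat.frequently_atTop_iff_infinite]
    have := h ε hε
    refine this.mono fun m hm => ?_
    simpa [Metric.mem_ball, Real.dist_eq] using hm
  · intro h ε hε
    have := h (Metric.ball η ε) (Metric.ball_mem_nhds _ hε)
    rw [Nat.frequently_atTop_iff_infinite] at this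
    refine this.mono fun m hm => ?_
    simpa [Metric.mem_ball, Real.dist_eq] using hm


lemma accPts_periodic {N : ℕ} (hN : 0 < N) (g : Fin N → ℝ) :
    {η : ℝ | ∀ ε > 0, {m : ℕ | |g ⟨m % N, Nat.mod_lt m hN⟩ - η| < ε}.Infinite}
      = Set.range g := by
  ext η
  constructor
  · intro h
    by_contra hr
    have hne : (Finset.univ.image g).Nonempty := by
      refine Finset.image_nonempty.2 ⟨⟨0, hN⟩, Finset.mem_univ _⟩
    set S := (Finset.univ.image g).image (fun v => |v - η|) with hS
    have hSne : S.Nonempty := Finset.image_nonempty.2 hne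
    set ε := S.min' hSne with hε
    have hεpos : 0 < ε := by
      have hmem := S.min'_mem hSne
      rw [← hε] at hmem
      simp only [hS, Finset.mem_image] at hmem
      obtain ⟨v, hv, hveq⟩ := hmem
      obtain ⟨i, -, hgi⟩ := hv
      rw [← hveq]
      have hv : v ≠ η := by rintro rfl; exact hr ⟨i, hgi⟩
      have := sub_ne_zero_of_ne hv
      positivity
    obtain ⟨m, hm⟩ := (h ε hεpos).nonempty
    have hge : ε ≤ |g ⟨m % N, Nat.mod_lt m hN⟩ - η| := by
      apply Finset.min'_le
      exact Finset.mem_image.2 ⟨_, Finset.mem_image.2 ⟨_, Finset.mem_univ _, rfl⟩, rfl⟩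
    exact absurd hm (by simp only [Set.mem_setOf_eq]; linarith)
  · rintro ⟨i, rfl⟩ ε hε
    have : Set.range (fun q : ℕ => N * q + (i : ℕ)) ⊆
        {m : ℕ | |g ⟨m % N, Nat.mod_lt m hN⟩ - g i| < ε} := by
      rintro - ⟨q, rfl⟩
      have hmod : (N * q + (i : ℕ)) % N = (i : ℕ) := by
        simp [Nat.mul_add_mod, Nat.mod_eq_of_lt i.isLt]
      have : (⟨(N * q + (i : ℕ)) % N, Nat.mod_lt _ hN⟩ : Fin N) = i := by
        ext; simp [hmod]
      simp only [Set.mem_setOf_eq, this, sub_self, abs_zero]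
      exact hε
    refine Set.Infinite.mono this ?_
    apply Set.infinite_range_of_injective
    intro a b hab
    simp only [add_left_inj] at hab
    exact Nat.eq_of_mul_eq_mul_left hN hab


lemma det_powmat_ne_zero (D : ℕ) :
    (Matrix.of fun i j : Fin D => ((i : ℚ) + 1) ^ ((j : ℕ) + 1)).det ≠ 0 := by
  have h1 : (Matrix.of fun i j : Fin D => ((i : ℚ) + 1) ^ ((j : ℕ) + 1))
      = Matrix.of (fun i j : Fin D => ((i : ℚ) + 1) * (Matrix.vandermonde (fun i : Fin D => ((i : ℚ) + 1))) i j) := by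
    ext i j
    simp [Matrix.vandermonde, pow_succ, mul_comm]
  rw [h1, Matrix.det_mul_column, Matrix.det_vandermonde]
  apply mul_ne_zero
  · apply Finset.prod_ne_zero_iff.2
    intro i _
    positivity
  · apply Finset.prod_ne_zero_iff.2
    intro i _
    apply Finset.prod_ne_zero_iff.2
    intro j hj
    have hij : i < j := Finset.mem_Ioi.1 hj
    have : ((i : ℕ) : ℚ) < ((j : ℕ) : ℚ) := by exact_mod_cast hij
    intro h
    have h2 : ((j : ℕ) : ℚ) + 1 = ((i : ℕ) : ℚ) + 1 := sub_eq_zero.1 h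
    linarith

open MvPolynomial in
lemma exists_good_t (N D : ℕ) :
    ∃ t : Fin N → ℚ, ∀ k r : Fin D → Fin N, Function.Injective k →
      (∀ i, r i ∉ Set.range k) →
      (Matrix.of fun i j : Fin D =>
        t (k i) ^ ((j : ℕ) + 1) - t (r i) ^ ((j : ℕ) + 1)).det ≠ 0 := by
  classical
  set P : (Fin D → Fin N) → (Fin D → Fin N) → Matrix (Fin D) (Fin D) (MvPolynomial (Fin N) ℚ) :=
    fun k r => Matrix.of fun i j =>
      (X (k i) : MvPolynomial (Fin N) ℚ) ^ ((j : ℕ) + 1) - (X (r i)) ^ ((j : ℕ) + 1) with hP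
  have hdet : ∀ k r : Fin D → Fin N, Function.Injective k →
      (∀ i, r i ∉ Set.range k) → (P k r).det ≠ 0 := by
    intro k r hk hr hzero
    -- evaluate at c
    set c : Fin N → ℚ := fun m => ∑ i ∈ Finset.univ.filter (fun i => k i = m), ((i : ℕ) + 1 : ℚ)
      with hc
    have hck : ∀ i, c (k i) = (i : ℕ) + 1 := by
      intro i
      have hfilter : Finset.univ.filter (fun i' => k i' = k i) = {i} := by
        ext i'
        simp only [Finset.mem_filter, Finset.mem_univ, true_and, Finset.mem_singleton]
        exact ⟨fun h => hk h, fun h => by rw [h]⟩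
      show (∑ i' ∈ Finset.univ.filter (fun i' => k i' = k i), ((i' : ℕ) + 1 : ℚ)) = _
      rw [hfilter]
      simp
    have hcr : ∀ i, c (r i) = 0 := by
      intro i
      have hfilter : Finset.univ.filter (fun i' => k i' = r i) = ∅ := by
        ext i'
        simp only [Finset.mem_filter, Finset.mem_univ, true_and, Finset.notMem_empty,
          iff_false]
        intro h
        exact hr i ⟨i', h⟩
      show (∑ i' ∈ Finset.univ.filter (fun i' => k i' = r i), ((i' : ℕ) + 1 : ℚ)) = _
      rw [hfilter]
      simp
    have heval := congrArg (MvPolynomial.eval c) hzero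
    rw [RingHom.map_det] at heval
    have hmat : (MvPolynomial.eval c : MvPolynomial (Fin N) ℚ →+* ℚ).mapMatrix (P k r)
        = Matrix.of fun i j : Fin D => ((i : ℚ) + 1) ^ ((j : ℕ) + 1) := by
      ext i j
      simp [hP, RingHom.mapMatrix_apply, hck, hcr]
    rw [hmat] at heval
    exact det_powmat_ne_zero D heval
  -- product over valid patterns
  set Pats : Finset ((Fin D → Fin N) × (Fin D → Fin N)) :=
    Finset.univ.filter (fun p => Function.Injective p.1 ∧ ∀ i, p.2 i ∉ Set.range p.1) with hPats
  set Q : MvPolynomial (Fin N) ℚ := ∏ p ∈ Pats, (P p.1 p.2).det with hQ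
  have hQne : Q ≠ 0 := by
    rw [hQ]
    apply Finset.prod_ne_zero_iff.2
    intro p hp
    rw [hPats, Finset.mem_filter] at hp
    exact hdet p.1 p.2 hp.2.1 hp.2.2
  have hex : ∃ c : Fin N → ℚ, MvPolynomial.eval c Q ≠ 0 := by
    by_contra h
    push_neg at h
    exact hQne (MvPolynomial.funext (fun x => by rw [h x, map_zero]))
  obtain ⟨c, hcQ⟩ := hex
  refine ⟨c, fun k r hk hr => ?_⟩
  have hmem : (k, r) ∈ Pats := by
    rw [hPats, Finset.mem_filter]
    exact ⟨Finset.mem_univ _, hk, hr⟩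
  have hfac : MvPolynomial.eval c ((P k r).det) ≠ 0 := by
    intro h0
    exact hcQ (by rw [hQ, map_prod]; exact Finset.prod_eq_zero hmem h0)
  rw [RingHom.map_det] at hfac
  convert hfac using 2
  ext i j
  simp [hP, RingHom.mapMatrix_apply]

lemma vec_eq_zero_of_mulVec {D : ℕ} (M : Matrix (Fin D) (Fin D) ℝ) (h : M.det ≠ 0)
    (a : Fin D → ℝ) (h2 : M.mulVec a = 0) : a = 0 := by
  have hu : IsUnit M.det := isUnit_iff_ne_zero.2 h
  calc a = (M⁻¹ * M).mulVec a := by rw [Matrix.nonsing_inv_mul M hu, Matrix.one_mulVec]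
  _ = M⁻¹.mulVec (M.mulVec a) := (Matrix.mulVec_mulVec a M⁻¹ M).symm
  _ = 0 := by rw [h2, Matrix.mulVec_zero]

lemma part1_lower (n d : ℕ) (hn : 2 ≤ n) (t : Fin (n + d) → ℚ)
    (ht : ∀ k r : Fin (d + 1) → Fin (n + d), Function.Injective k →
      (∀ i, r i ∉ Set.range k) →
      (Matrix.of fun i j : Fin (d + 1) =>
        t (k i) ^ ((j : ℕ) + 1) - t (r i) ^ ((j : ℕ) + 1)).det ≠ 0)
    (a : Fin (d + 1) → ℝ) (ha : a ≠ 0) :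
    n ≤ (Finset.univ.image
      (fun i : Fin (n + d) => ∑ j : Fin (d + 1), a j * ((t i : ℝ)) ^ ((j : ℕ) + 1))).card := by
  classical
  by_contra hcard
  push_neg at hcard
  set g : Fin (n + d) → ℝ := fun i => ∑ j : Fin (d + 1), a j * ((t i : ℝ)) ^ ((j : ℕ) + 1)
    with hg
  have min'_eq : ∀ (s1 s2 : Finset (Fin (n + d))) (h1 : s1.Nonempty) (h2 : s2.Nonempty),
      s1 = s2 → s1.min' h1 = s2.min' h2 := by rintro s1 s2 h1 h2 rfl; rfl
  have hne : ∀ i : Fin (n + d), (Finset.univ.filter (fun i' => g i' = g i)).Nonempty :=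
    fun i => ⟨i, by simp⟩
  set rep : Fin (n + d) → Fin (n + d) :=
    fun i => (Finset.univ.filter (fun i' => g i' = g i)).min' (hne i) with hrep
  have hgrep : ∀ i, g (rep i) = g i := by
    intro i
    have := (Finset.univ.filter (fun i' => g i' = g i)).min'_mem (hne i)
    exact (Finset.mem_filter.1 this).2
  have hrepeq : ∀ i1 i2, g i1 = g i2 → rep i1 = rep i2 := by
    intro i1 i2 h
    exact min'_eq _ _ _ _ (by ext x; simp [h])
  set Reps : Finset (Fin (n + d)) := Finset.univ.image rep with hReps
  have hfix : ∀ x ∈ Reps, rep x = x := by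
    intro x hx
    obtain ⟨i, -, rfl⟩ := Finset.mem_image.1 hx
    exact hrepeq _ _ (hgrep i)
  have hRepsCard : Reps.card ≤ (Finset.univ.image g).card := by
    apply Finset.card_le_card_of_injOn g
    · intro x _
      exact Finset.mem_image_of_mem g (Finset.mem_univ x)
    · intro x hx y hy hxy
      rw [← hfix x hx, ← hfix y hy]
      exact hrepeq _ _ hxy
  have hD : d + 1 ≤ (Finset.univ \ Reps).card := by
    have h1 : (Finset.univ \ Reps).card = (n + d) - Reps.card := by
      rw [Finset.card_sdiff_of_subset (Finset.subset_univ _)]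
      simp
    omega
  obtain ⟨K, hKsub, hKcard⟩ := Finset.exists_subset_card_eq hD
  set k : Fin (d + 1) → Fin (n + d) := fun i => (K.orderIsoOfFin hKcard i : Fin (n + d))
    with hk
  have hkinj : Function.Injective k := by
    intro i1 i2 h
    exact (K.orderIsoOfFin hKcard).injective (Subtype.ext h)
  have hkmem : ∀ i, k i ∈ K := fun i => (K.orderIsoOfFin hKcard i).2
  set r : Fin (d + 1) → Fin (n + d) := fun i => rep (k i) with hr
  have hrnot : ∀ i, r i ∉ Set.range k := by
    rintro i ⟨i', hi'⟩
    have h1 : r i ∈ Reps := Finset.mem_image_of_mem rep (Finset.mem_univ _)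
    have h2 : k i' ∈ Finset.univ \ Reps := hKsub (hkmem i')
    rw [← hi'] at h1
    exact (Finset.mem_sdiff.1 h2).2 h1
  set MR : Matrix (Fin (d + 1)) (Fin (d + 1)) ℝ := Matrix.of fun i j =>
    ((t (k i) : ℝ)) ^ ((j : ℕ) + 1) - ((t (r i) : ℝ)) ^ ((j : ℕ) + 1) with hMR
  have hdetR : MR.det ≠ 0 := by
    have hcast : MR = (Rat.castHom ℝ).mapMatrix (Matrix.of fun i j : Fin (d + 1) =>
        t (k i) ^ ((j : ℕ) + 1) - t (r i) ^ ((j : ℕ) + 1)) := by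
      ext i j
      simp [hMR, RingHom.mapMatrix_apply]
    rw [hcast, ← RingHom.map_det]
    simp only [Rat.coe_castHom]
    exact_mod_cast ht k r hkinj hrnot
  have hmv : MR.mulVec a = 0 := by
    funext i
    have hgg : g (r i) = g (k i) := hgrep (k i)
    show (∑ j, MR i j * a j) = 0
    have : (∑ j, MR i j * a j) = g (k i) - g (r i) := by
      rw [hg]
      simp only [hMR, Matrix.of_apply, sub_mul]
      rw [Finset.sum_sub_distrib]
      congr 1 <;> exact Finset.sum_congr rfl fun j _ => mul_comm _ _
    rw [this, hgg, sub_self]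
  exact ha (vec_eq_zero_of_mulVec MR hdetR a hmv)

lemma part1 (n d : ℕ) (hn : 2 ≤ n) :
    ∃ V : Submodule ℝ linf, Module.finrank ℝ V = d + 1 ∧
      ∀ x ∈ V, x ≠ 0 → (AccPts ⇑x).Finite ∧
        n ≤ (AccPts ⇑x).ncard ∧ (AccPts ⇑x).ncard ≤ n + d := by
  classical
  have hN : 0 < n + d := by omega
  obtain ⟨t, ht⟩ := exists_good_t (n + d) (d + 1)
  set idx : ℕ → Fin (n + d) := fun m => ⟨m % (n + d), Nat.mod_lt m hN⟩ with hidx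
  set fseq : Fin (d + 1) → ℕ → ℝ := fun j m => ((t (idx m) : ℝ)) ^ ((j : ℕ) + 1) with hfseq
  have hmemlp : ∀ j, Memℓp (fseq j) ⊤ := by
    intro j
    apply memℓp_infty
    have hsub : (Set.range fun m => ‖fseq j m‖) ⊆
        (fun i : Fin (n + d) => ‖((t i : ℝ)) ^ ((j : ℕ) + 1)‖) '' Set.univ := by
      rintro - ⟨m, rfl⟩
      exact ⟨idx m, Set.mem_univ _, rfl⟩
    exact ((Set.finite_univ.image _).subset hsub).bddAbove
  set xlp : Fin (d + 1) → linf := fun j => ⟨fseq j, hmemlp j⟩ with hxlp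
  have hcoe : ∀ j, ⇑(xlp j) = fseq j := fun j => rfl
  set g : (Fin (d + 1) → ℝ) → Fin (n + d) → ℝ :=
    fun a i => ∑ j : Fin (d + 1), a j * ((t i : ℝ)) ^ ((j : ℕ) + 1) with hgdef
  have hsumcoe : ∀ a : Fin (d + 1) → ℝ,
      ⇑(∑ j, a j • xlp j) = fun m => g a (idx m) := by
    intro a
    rw [lp.coeFn_sum]
    funext m
    rw [Finset.sum_apply]
    exact Finset.sum_congr rfl fun j _ => by rw [lp.coeFn_smul, Pi.smul_apply, hcoe]; rfl
  have hacc : ∀ a : Fin (d + 1) → ℝ,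
      AccPts (fun m => g a (idx m)) = Set.range (g a) := by
    intro a
    exact accPts_periodic hN (g a)
  have hrange : ∀ a : Fin (d + 1) → ℝ,
      Set.range (g a) = ↑(Finset.univ.image (g a)) := by
    intro a
    rw [Finset.coe_image, Finset.coe_univ, Set.image_univ]
  have hlow : ∀ a : Fin (d + 1) → ℝ, a ≠ 0 → n ≤ (Set.range (g a)).ncard := by
    intro a ha
    rw [hrange, Set.ncard_coe_finset]
    exact part1_lower n d hn t ht a ha
  have hupp : ∀ a : Fin (d + 1) → ℝ, (Set.range (g a)).ncard ≤ n + d := by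
    intro a
    rw [hrange, Set.ncard_coe_finset]
    calc (Finset.univ.image (g a)).card ≤ Finset.univ.card := Finset.card_image_le
    _ = n + d := by simp
  have hzero : ∀ a : Fin (d + 1) → ℝ, (∑ j, a j • xlp j) = 0 → a = 0 := by
    intro a hsum0
    by_contra ha
    have hcoe0 : ∀ m, g a (idx m) = 0 := by
      intro m
      have := congrFun (hsumcoe a) m
      rw [hsum0] at this
      rw [← this]
      simp [lp.coeFn_zero]
    have hall : ∀ i : Fin (n + d), g a i = 0 := by
      intro i
      have := hcoe0 (i : ℕ)
      have hidxi : idx (i : ℕ) = i := by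
        ext
        simp [hidx, Nat.mod_eq_of_lt i.isLt]
      rwa [hidxi] at this
    have hr : Set.range (g a) ⊆ {0} := by rintro - ⟨i, rfl⟩; exact hall i
    have : (Set.range (g a)).ncard ≤ 1 := by
      calc (Set.range (g a)).ncard ≤ ({0} : Set ℝ).ncard :=
        Set.ncard_le_ncard hr (Set.finite_singleton 0)
      _ = 1 := Set.ncard_singleton 0
    have := hlow a ha
    omega
  have hindep : LinearIndependent ℝ xlp := by
    rw [Fintype.linearIndependent_iff]
    intro a hsum0
    have := hzero a hsum0
    intro i
    rw [this]
    rfl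
  refine ⟨Submodule.span ℝ (Set.range xlp), ?_, ?_⟩
  · rw [finrank_span_eq_card hindep]
    simp
  · intro x hx hxne
    rw [Submodule.mem_span_range_iff_exists_fun] at hx
    obtain ⟨a, haeq⟩ := hx
    have ha : a ≠ 0 := by
      rintro rfl
      apply hxne
      rw [← haeq]
      simp
    have hxcoe : ⇑x = fun m => g a (idx m) := by rw [← haeq]; exact hsumcoe a
    rw [hxcoe, hacc a]
    exact ⟨Set.finite_range _, hlow a ha, hupp a⟩

set_option synthInstance.maxHeartbeats 1000000 in
set_option maxHeartbeats 1000000 in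
lemma part2 (n d : ℕ) (hn : 2 ≤ n) :
    ¬ ∃ V : Submodule ℝ linf, Module.finrank ℝ V = d + 2 ∧
      ∀ x ∈ V, x ≠ 0 → (AccPts ⇑x).Finite ∧
        n ≤ (AccPts ⇑x).ncard ∧ (AccPts ⇑x).ncard ≤ n + d := by
  classical
  rintro ⟨V, hrank, hV⟩
  haveI : Module.Finite ℝ V := Module.finite_of_finrank_pos (R := ℝ) (M := V)
    (by rw [hrank]; omega)
  haveI : Module.Free ℝ V := Module.Free.of_divisionRing ℝ _
  set b := Module.finBasisOfFinrankEq ℝ V hrank with hb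
  set xb : Fin (d + 2) → linf := fun j => ((b j : V) : linf) with hxb
  set X : ℕ → (Fin (d + 2) → ℝ) := fun m j => (xb j : ℕ → ℝ) m with hX
  set dot : (Fin (d + 2) → ℝ) → (Fin (d + 2) → ℝ) → ℝ := fun a p => ∑ j, a j * p j with hdot
  set yV : (Fin (d + 2) → ℝ) → V := fun a => ∑ j, a j • b j with hyV
  have hymem : ∀ a, ((yV a : V) : linf) ∈ V := fun a => SetLike.coe_mem _
  have hyne : ∀ a : Fin (d + 2) → ℝ, a ≠ 0 → ((yV a : V) : linf) ≠ 0 := by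
    intro a ha h0
    have h1 : yV a = 0 := by
      exact_mod_cast (ZeroMemClass.coe_eq_zero).1 h0
    have h2 := Fintype.linearIndependent_iff.1 b.linearIndependent a h1
    exact ha (funext h2)
  have hycoe : ∀ a, (((yV a : V) : linf) : ℕ → ℝ) = fun m => dot a (X m) := by
    intro a
    have h1 : ((yV a : V) : linf) = ∑ j, a j • xb j := by
      rw [hyV]
      push_cast
      rfl
    rw [h1, lp.coeFn_sum]
    funext m
    rw [Finset.sum_apply]
    exact Finset.sum_congr rfl fun j _ => by rw [lp.coeFn_smul, Pi.smul_apply]; rfl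
  have hdotcont : ∀ a, Continuous (dot a) :=
    fun a => continuous_finset_sum _ fun j _ => continuous_const.mul (continuous_apply j)
  set A : Set (Fin (d + 2) → ℝ) := {p | MapClusterPt p atTop X} with hA
  -- easy inclusion
  have hAsub : ∀ a : Fin (d + 2) → ℝ, dot a '' A ⊆ AccPts ⇑((yV a : V) : linf) := by
    rintro a - ⟨p, hp, rfl⟩
    rw [accPts_iff_mapClusterPt, hycoe]
    exact MapClusterPt.continuousAt_comp (hdotcont a).continuousAt hp
  -- boundedness
  set C : ℝ := ∑ j, ‖xb j‖ with hC
  have hXb : ∀ m j, X m j ∈ Set.Icc (-C) C := by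
    intro m j
    have h1 : ‖(xb j : ℕ → ℝ) m‖ ≤ ‖xb j‖ := lp.norm_apply_le_norm ENNReal.top_ne_zero (xb j) m
    have h2 : ‖xb j‖ ≤ C := by
      rw [hC]
      exact Finset.single_le_sum (fun i _ => norm_nonneg (xb i)) (Finset.mem_univ j)
    have := h1.trans h2
    rw [Real.norm_eq_abs, abs_le] at this
    exact ⟨this.1, this.2⟩
  set K : Set (Fin (d + 2) → ℝ) := Set.univ.pi (fun _ => Set.Icc (-C) C) with hK
  have hKcomp : IsCompact K := isCompact_univ_pi fun _ => isCompact_Icc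
  have hXK : ∀ m, X m ∈ K := fun m => by
    rw [hK, Set.mem_univ_pi]
    exact fun j => hXb m j
  have hmapK : map X atTop ≤ 𝓟 K :=
    Filter.le_principal_iff.mpr (Filter.mem_map.mpr (Filter.Eventually.of_forall hXK))
  -- A nonempty
  have hAne : A.Nonempty := by
    obtain ⟨p, -, hp⟩ := hKcomp.exists_clusterPt hmapK
    exact ⟨p, hp⟩
  -- hard inclusion
  have hAcc : ∀ a : Fin (d + 2) → ℝ, AccPts ⇑((yV a : V) : linf) ⊆ dot a '' A := by
    intro a η hη
    rw [accPts_iff_mapClusterPt, hycoe] at hη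
    have hη2 : NeBot (𝓝 η ⊓ map (dot a) (map X atTop)) := by
      rw [Filter.map_map]
      exact hη
    set F : Filter (Fin (d + 2) → ℝ) := map X atTop ⊓ comap (dot a) (𝓝 η) with hF
    have hFne : NeBot F := by
      have hpp : map (dot a) F = map (dot a) (map X atTop) ⊓ 𝓝 η := by
        rw [hF]
        exact Filter.push_pull _ _ _
      have : NeBot (map (dot a) F) := by
        rw [hpp, inf_comm]
        exact hη2
      exact (Filter.map_neBot_iff _).1 this
    have hFle : F ≤ 𝓟 K := le_trans inf_le_left hmapK
    obtain ⟨p, -, hp⟩ := hKcomp.exists_clusterPt hFle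
    have hpA : p ∈ A := hp.mono (le_trans inf_le_left (Filter.map_mono le_rfl))
    refine ⟨p, hpA, ?_⟩
    have h2 : ClusterPt p (comap (dot a) (𝓝 η)) := hp.mono inf_le_right
    have h3 : NeBot (map (dot a) (𝓝 p ⊓ comap (dot a) (𝓝 η))) := Filter.NeBot.map h2 _
    have h4 : map (dot a) (𝓝 p ⊓ comap (dot a) (𝓝 η)) ≤ 𝓝 (dot a p) ⊓ 𝓝 η := by
      refine le_inf ?_ ?_
      · exact le_trans (Filter.map_mono inf_le_left) ((hdotcont a).continuousAt (x := p))
      · exact le_trans (Filter.map_mono inf_le_right) Filter.map_comap_le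
    exact eq_of_nhds_neBot (h3.mono h4)
  -- A finite
  have hAfin : A.Finite := by
    have hproj : ∀ j : Fin (d + 2), ((fun p : Fin (d + 2) → ℝ => p j) '' A).Finite := by
      intro j
      have hsingle : yV (Pi.single j 1) = b j := by
        rw [hyV]
        simp [Pi.single_apply, ite_smul]
      have hbne : ((b j : V) : linf) ≠ 0 := by
        intro h
        exact b.ne_zero j ((ZeroMemClass.coe_eq_zero).1 h)
      have hfin := (hV ((b j : V) : linf) (SetLike.coe_mem _) hbne).1
      refine hfin.subset ?_
      rintro - ⟨p, hp, rfl⟩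
      have hd : dot (Pi.single j 1) p = p j := by
        rw [hdot]
        simp [Pi.single_apply, ite_mul]
      have := hAsub (Pi.single j 1) ⟨p, hp, rfl⟩
      rw [hsingle] at this
      rwa [hd] at this
    have hsub : A ⊆ Set.univ.pi (fun j => (fun p : Fin (d + 2) → ℝ => p j) '' A) := by
      intro p hp
      rw [Set.mem_univ_pi]
      exact fun j => ⟨p, hp, rfl⟩
    exact (Set.Finite.pi hproj).subset hsub
  -- |A| ≤ n + d
  have hAcard : A.ncard ≤ n + d := by
    set FA := hAfin.toFinset with hFA
    set Q : Polynomial ℝ := ∏ pq ∈ (FA ×ˢ FA).filter (fun pq => pq.1 ≠ pq.2),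
      (∑ j : Fin (d + 2), Polynomial.C (pq.1 j - pq.2 j) * Polynomial.X ^ (j : ℕ)) with hQ
    have hfac : ∀ (p q : Fin (d + 2) → ℝ), p ≠ q →
        (∑ j : Fin (d + 2), Polynomial.C (p j - q j) * Polynomial.X ^ (j : ℕ)) ≠ 0 := by
      intro p q hpq h0
      obtain ⟨j0, hj0⟩ := Function.ne_iff.1 hpq
      have hcoeff := congrArg (fun P => Polynomial.coeff P (j0 : ℕ)) h0
      simp only [Polynomial.finset_sum_coeff, Polynomial.coeff_C_mul, Polynomial.coeff_X_pow,
        Polynomial.coeff_zero, mul_ite, mul_one, mul_zero, Fin.val_eq_val,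
        Finset.sum_ite_eq', Finset.sum_ite_eq, Finset.mem_univ, if_true] at hcoeff
      exact hj0 (sub_eq_zero.1 hcoeff)
    have hQne : Q ≠ 0 := by
      rw [hQ]
      apply Finset.prod_ne_zero_iff.2
      intro pq hpq
      rw [Finset.mem_filter] at hpq
      exact hfac pq.1 pq.2 hpq.2
    obtain ⟨s, hs⟩ : ∃ s : ℝ, ¬ Polynomial.IsRoot Q s := by
      have hfin := Polynomial.finite_setOf_isRoot hQne
      obtain ⟨s, hs⟩ := hfin.infinite_compl.nonempty
      exact ⟨s, hs⟩
    set a : Fin (d + 2) → ℝ := fun j => s ^ (j : ℕ) with ha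
    have hane : a ≠ 0 := by
      intro h
      have := congrFun h 0
      simp [ha] at this
    have hinj : Set.InjOn (dot a) A := by
      intro p hp q hq heq
      by_contra hne
      have hmem : (p, q) ∈ (FA ×ˢ FA).filter (fun pq => pq.1 ≠ pq.2) := by
        rw [Finset.mem_filter, Finset.mem_product]
        exact ⟨⟨hAfin.mem_toFinset.2 hp, hAfin.mem_toFinset.2 hq⟩, hne⟩
      have heval : Polynomial.eval s
          (∑ j : Fin (d + 2), Polynomial.C (p j - q j) * Polynomial.X ^ (j : ℕ)) = 0 := by
        rw [Polynomial.eval_finset_sum]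
        simp only [Polynomial.eval_mul, Polynomial.eval_C, Polynomial.eval_pow,
          Polynomial.eval_X]
        have : ∑ j : Fin (d + 2), (p j - q j) * s ^ (j : ℕ) = dot a p - dot a q := by
          rw [hdot]
          rw [← Finset.sum_sub_distrib]
          exact Finset.sum_congr rfl fun j _ => by ring
        rw [this, heq, sub_self]
      apply hs
      rw [hQ]
      unfold Polynomial.IsRoot
      rw [Polynomial.eval_prod]
      exact Finset.prod_eq_zero hmem heval
    have h1 : A.ncard = (dot a '' A).ncard := (Set.ncard_image_of_injOn hinj).symm
    have h2 : (dot a '' A).ncard ≤ (AccPts ⇑((yV a : V) : linf)).ncard :=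
      Set.ncard_le_ncard (hAsub a) (hV _ (hymem a) (hyne a hane)).1
    have h3 := (hV _ (hymem a) (hyne a hane)).2.2
    omega
  -- A affinely spans
  obtain ⟨p₀, hp₀⟩ := hAne
  set Diffs : Set (Fin (d + 2) → ℝ) := (fun p => p - p₀) '' A with hDiffs
  have hdual : ∀ (W : Submodule ℝ (Fin (d + 2) → ℝ)), W ≠ ⊤ →
      ∃ a : Fin (d + 2) → ℝ, a ≠ 0 ∧ ∀ v ∈ W, dot a v = 0 := by
    intro W hW
    obtain ⟨φ, hφne, hφbot⟩ :=
      Submodule.exists_dual_map_eq_bot_of_lt_top (lt_top_iff_ne_top.2 hW) inferInstance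
    set a : Fin (d + 2) → ℝ := fun j => φ (fun j' => if j = j' then 1 else 0) with ha
    have hφdot : ∀ p, dot a p = φ p := by
      intro p
      rw [LinearMap.pi_apply_eq_sum_univ φ p, hdot]
      refine Finset.sum_congr rfl fun j _ => ?_
      simp only [ha, smul_eq_mul]
      ring
    refine ⟨a, ?_, ?_⟩
    · intro h
      apply hφne
      apply LinearMap.ext
      intro p
      rw [← hφdot, h]
      simp [hdot]
    · intro v hv
      rw [hφdot]
      have : φ v ∈ W.map φ := Submodule.mem_map_of_mem hv
      rw [hφbot] at this
      simpa using this
  have hspan : Submodule.span ℝ Diffs = ⊤ := by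
    by_contra hne
    obtain ⟨a, hane, hav⟩ := hdual _ hne
    have hconst : ∀ p ∈ A, dot a p = dot a p₀ := by
      intro p hp
      have hv : p - p₀ ∈ Submodule.span ℝ Diffs :=
        Submodule.subset_span ⟨p, hp, rfl⟩
      have := hav _ hv
      have hsub : dot a (p - p₀) = dot a p - dot a p₀ := by
        rw [hdot]
        rw [← Finset.sum_sub_distrib]
        exact Finset.sum_congr rfl fun j _ => by simp [Pi.sub_apply]; ring
      rw [hsub] at this
      linarith
    have hsub2 : AccPts ⇑((yV a : V) : linf) ⊆ {dot a p₀} := by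
      intro η hη
      obtain ⟨p, hp, rfl⟩ := hAcc a hη
      exact hconst p hp
    have hle : (AccPts ⇑((yV a : V) : linf)).ncard ≤ 1 := by
      calc (AccPts ⇑((yV a : V) : linf)).ncard ≤ ({dot a p₀} : Set ℝ).ncard :=
        Set.ncard_le_ncard hsub2 (Set.finite_singleton _)
      _ = 1 := Set.ncard_singleton _
    have := (hV _ (hymem a) (hyne a hane)).2.1
    omega
  obtain ⟨sv, hsvsub, hsvspan, hsvli⟩ := exists_linearIndependent ℝ Diffs
  have hsvfin : sv.Finite := ((hAfin.image _).subset hsvsub)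
  haveI := hsvfin.fintype
  have hsvcard : sv.toFinset.card = d + 2 := by
    have h1 := finrank_span_set_eq_card hsvli
    rw [hsvspan, hspan] at h1
    rw [← h1]
    rw [finrank_top, Module.finrank_fintype_fun_eq_card, Fintype.card_fin]
  obtain ⟨s', hs'sub, hs'card⟩ := Finset.exists_subset_card_eq (s := sv.toFinset) (n := d + 1) (by omega)
  have hs'subset : (↑s' : Set (Fin (d + 2) → ℝ)) ⊆ sv := by
    intro v hv
    have := hs'sub hv
    rwa [Set.mem_toFinset] at this
  have hs'li : LinearIndependent ℝ ((↑) : (↑s' : Set (Fin (d + 2) → ℝ)) → (Fin (d + 2) → ℝ)) :=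
    LinearIndepOn.mono (R := ℝ) (v := id) hsvli hs'subset
  have hs'ne : Submodule.span ℝ (↑s' : Set (Fin (d + 2) → ℝ)) ≠ ⊤ := by
    intro h
    have h1 : (↑s' : Set (Fin (d + 2) → ℝ)).finrank ℝ ≤ s'.card :=
      finrank_span_finset_le_card s'
    rw [Set.finrank, h, finrank_top, Module.finrank_fintype_fun_eq_card, Fintype.card_fin]
      at h1
    omega
  obtain ⟨a, hane, hav⟩ := hdual _ hs'ne
  have h0notin : (0 : Fin (d + 2) → ℝ) ∉ (↑s' : Set (Fin (d + 2) → ℝ)) := by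
    intro h0
    exact hs'li.ne_zero ⟨0, h0⟩ rfl
  set T : Set (Fin (d + 2) → ℝ) := insert p₀ ((fun v => p₀ + v) '' ↑s') with hT
  have hTsubA : T ⊆ A := by
    rintro p (rfl | ⟨v, hv, rfl⟩)
    · exact hp₀
    · obtain ⟨q, hq, rfl⟩ := hsvsub (hs'subset hv)
      simpa using hq
  have hdsub : ∀ p q : Fin (d + 2) → ℝ, dot a (p - q) = dot a p - dot a q := by
    intro p q
    rw [hdot, ← Finset.sum_sub_distrib]
    exact Finset.sum_congr rfl fun j _ => by simp [Pi.sub_apply]; ring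
  have hdadd : ∀ p q : Fin (d + 2) → ℝ, dot a (p + q) = dot a p + dot a q := by
    intro p q
    rw [hdot, ← Finset.sum_add_distrib]
    exact Finset.sum_congr rfl fun j _ => by simp [Pi.add_apply]; ring
  have hφT : ∀ p ∈ T, dot a p = dot a p₀ := by
    rintro p (rfl | ⟨v, hv, rfl⟩)
    · rfl
    · rw [hdadd]
      have : dot a v = 0 := hav v (Submodule.subset_span hv)
      rw [this, add_zero]
  have hTcard : d + 2 ≤ T.ncard := by
    have hinj : Set.InjOn (fun v => p₀ + v) (↑s' : Set (Fin (d + 2) → ℝ)) := by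
      intro u hu v hv huv
      exact add_left_cancel huv
    have himg : ((fun v => p₀ + v) '' ↑s').ncard = d + 1 := by
      rw [Set.ncard_image_of_injOn hinj, Set.ncard_coe_finset, hs'card]
    have hnotmem : p₀ ∉ (fun v => p₀ + v) '' (↑s' : Set (Fin (d + 2) → ℝ)) := by
      rintro ⟨v, hv, hveq⟩
      have hv0 : v = 0 := by
        have h := hveq
        simpa using h
      rw [hv0] at hv
      exact h0notin hv
    have hins : T.ncard = ((fun v => p₀ + v) '' ↑s').ncard + 1 :=
      Set.ncard_insert_of_notMem hnotmem ((s'.finite_toSet).image _)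
    omega
  have hvals : AccPts ⇑((yV a : V) : linf) ⊆ insert (dot a p₀) (dot a '' (A \ T)) := by
    intro η hη
    obtain ⟨p, hp, rfl⟩ := hAcc a hη
    by_cases hpT : p ∈ T
    · rw [Set.mem_insert_iff]
      exact Or.inl (hφT p hpT)
    · exact Set.mem_insert_of_mem _ ⟨p, ⟨hp, hpT⟩, rfl⟩
  have hfinvals : (insert (dot a p₀) (dot a '' (A \ T))).Finite :=
    ((hAfin.diff).image _).insert _
  have hb1 : (AccPts ⇑((yV a : V) : linf)).ncard
      ≤ (insert (dot a p₀) (dot a '' (A \ T))).ncard :=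
    Set.ncard_le_ncard hvals hfinvals
  have hb2 : (insert (dot a p₀) (dot a '' (A \ T))).ncard ≤ (dot a '' (A \ T)).ncard + 1 :=
    Set.ncard_insert_le _ _
  have hb3 : (dot a '' (A \ T)).ncard ≤ (A \ T).ncard := Set.ncard_image_le (hAfin.diff)
  have hb4 : (A \ T).ncard = A.ncard - T.ncard := Set.ncard_diff hTsubA (hAfin.subset hTsubA)
  have hTA : T.ncard ≤ A.ncard := Set.ncard_le_ncard hTsubA hAfin
  have hge := (hV _ (hymem a) (hyne a hane)).2.1
  omega

theorem stmt_14 (n d : ℕ) (hn : 2 ≤ n) :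
    (∃ V : Submodule ℝ linf, Module.finrank ℝ V = d + 1 ∧
      ∀ x ∈ V, x ≠ 0 → (AccPts ⇑x).Finite ∧
        n ≤ (AccPts ⇑x).ncard ∧ (AccPts ⇑x).ncard ≤ n + d) ∧
    ¬ ∃ V : Submodule ℝ linf, Module.finrank ℝ V = d + 2 ∧
      ∀ x ∈ V, x ≠ 0 → (AccPts ⇑x).Finite ∧
        n ≤ (AccPts ⇑x).ncard ∧ (AccPts ⇑x).ncard ≤ n + d := by
  exact ⟨part1 n d hn, part2 n d hn⟩
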